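/- Population double robustness of the doubly robust functional with respect to the propensity model (robustness property of cATE_DR claimed in Section 5.3): let q : 𝒲 × ℰ → ℝ be an arbitrary function with 0 < q(w,e) < 1 for all (w,e) (a possibly misspecified propensity model) and let μ_oc be the true outcome regression among concurrent units. Then (1/𝒫(V=1)) · 𝔼[ 1{V=1} · ( (2A−1)/(A·q(W,E) + (1−A)·(1−q(W,E))) · (Y − μ_oc(A,W,E)) + μ_oc(1,W,E) − μ_oc(0,W,E) ) ] = Σ_{(w,e): 𝒫(W=w,E=e,V=1)>0} (μ_oc(1,w,e) − μ_oc(0,w,e)) · p(w,e|V=1). -/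

import Mathlib

open MeasureTheory Finset

/-- Conditional expectation given an event: `𝔼[X | B] := 𝔼[X · 1_B] / 𝒫(B)`. -/
noncomputable def condMean {Ω : Type*} [MeasurableSpace Ω] (P : Measure Ω)
    (X : Ω → ℝ) (B : Set Ω) : ℝ :=
  (∫ ω, B.indicator X ω ∂P) / (P B).toReal

/-- Population double robustness of the doubly robust functional with respect to the
propensity model (Section 5.3): for an arbitrary (possibly misspecified) propensity model
`q` with `0 < q(w,e) < 1` and the true outcome regression `μ_oc` among concurrent units,
`(1/𝒫(V=1)) · 𝔼[1{V=1} · ((2A−1)/(A·q(W,E)+(1−A)·(1−q(W,E))) · (Y − μ_oc(A,W,E))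
  + μ_oc(1,W,E) − μ_oc(0,W,E))] = Σ_{(w,e) : 𝒫(W=w,E=e,V=1)>0} (μ_oc(1,w,e) − μ_oc(0,w,e)) · p(w,e|V=1)`. -/
theorem doubly_robust_wrt_propensity_model
    {Ω : Type*} [MeasurableSpace Ω] (P : Measure Ω) [IsProbabilityMeasure P]
    {𝓦 ℰ : Type*} [Fintype 𝓦] [Fintype ℰ] [Nonempty 𝓦] [Nonempty ℰ]
    [MeasurableSpace 𝓦] [MeasurableSingletonClass 𝓦]
    [MeasurableSpace ℰ] [MeasurableSingletonClass ℰ]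
    (W : Ω → 𝓦) (E : Ω → ℰ) (V : Ω → Fin 2) (A : Ω → Fin 2) (Y : Ω → ℝ)
    (hW : Measurable W) (hE : Measurable E) (hV : Measurable V) (hA : Measurable A)
    (hY : Integrable Y P)
    (hV1 : 0 < P {ω | V ω = 1})
    -- positivity of both arms among concurrent units
    (hpos1 : ∀ (w : 𝓦) (e : ℰ), 0 < P {ω | W ω = w ∧ E ω = e ∧ V ω = 1} →
      0 < P {ω | A ω = 1 ∧ W ω = w ∧ E ω = e ∧ V ω = 1})
    (hpos0 : ∀ (w : 𝓦) (e : ℰ), 0 < P {ω | W ω = w ∧ E ω = e ∧ V ω = 1} →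
      0 < P {ω | A ω = 0 ∧ W ω = w ∧ E ω = e ∧ V ω = 1})
    -- the true outcome regression among concurrent units
    (μoc : Fin 2 → 𝓦 → ℰ → ℝ)
    (hμoc : ∀ (a : Fin 2) (w : 𝓦) (e : ℰ), μoc a w e =
      condMean P Y {ω | A ω = a ∧ W ω = w ∧ E ω = e ∧ V ω = 1})
    -- an arbitrary, possibly misspecified, propensity model bounded in (0,1)
    (q : 𝓦 → ℰ → ℝ) (hq : ∀ (w : 𝓦) (e : ℰ), 0 < q w e ∧ q w e < 1) :
    (1 / (P {ω | V ω = 1}).toReal) *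
      ∫ ω, (if V ω = 1 then
          (2 * ((A ω : ℕ) : ℝ) - 1) /
              (((A ω : ℕ) : ℝ) * q (W ω) (E ω) +
                (1 - ((A ω : ℕ) : ℝ)) * (1 - q (W ω) (E ω))) *
              (Y ω - μoc (A ω) (W ω) (E ω)) +
            μoc 1 (W ω) (E ω) - μoc 0 (W ω) (E ω)
        else 0) ∂P =
      ∑ w : 𝓦, ∑ e : ℰ,
        if 0 < P {ω | W ω = w ∧ E ω = e ∧ V ω = 1} then
          (μoc 1 w e - μoc 0 w e) *
            ((P {ω | W ω = w ∧ E ω = e ∧ V ω = 1}).toReal / (P {ω | V ω = 1}).toReal)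
        else 0 := by

  classical
  set S : Fin 2 → 𝓦 → ℰ → Set Ω :=
    fun a w e => {ω | A ω = a ∧ W ω = w ∧ E ω = e ∧ V ω = 1} with hSdef
  have hSm : ∀ a w e, MeasurableSet (S a w e) := by
    intro a w e
    have hrw : S a w e = A ⁻¹' {a} ∩ (W ⁻¹' {w} ∩ (E ⁻¹' {e} ∩ V ⁻¹' {1})) := by
      ext ω; simp [hSdef, Set.mem_inter_iff, and_assoc]
    rw [hrw]
    exact (hA (measurableSet_singleton a)).inter
      ((hW (measurableSet_singleton w)).inter
        ((hE (measurableSet_singleton e)).inter (hV (measurableSet_singleton 1))))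
  have hSfin : ∀ a w e, P (S a w e) ≠ ⊤ := fun a w e => measure_ne_top P _
  have hμoc' : ∀ (a : Fin 2) (w : 𝓦) (e : ℰ), μoc a w e = condMean P Y (S a w e) := hμoc
  -- key fact: the set-integral of Y over S equals μoc * P(S)
  have key : ∀ a w e, ∫ ω in S a w e, Y ω ∂P = μoc a w e * (P (S a w e)).toReal := by
    intro a w e
    rcases eq_or_lt_of_le (zero_le : (0 : ENNReal) ≤ P (S a w e)) with h0 | hpos
    · have hnull : P (S a w e) = 0 := h0.symm
      rw [Measure.restrict_eq_zero.mpr hnull, integral_zero_measure, hnull]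
      simp
    · have hne : (P (S a w e)).toReal ≠ 0 :=
        ENNReal.toReal_ne_zero.mpr ⟨hpos.ne', hSfin a w e⟩
      rw [hμoc' a w e]
      unfold condMean
      rw [integral_indicator (hSm a w e)]
      field_simp
  -- the coefficient function
  set g : Fin 2 → 𝓦 → ℰ → ℝ := fun a w e =>
    (2 * ((a : ℕ) : ℝ) - 1) /
      (((a : ℕ) : ℝ) * q w e + (1 - ((a : ℕ) : ℝ)) * (1 - q w e)) with hgdef
  -- the summand functions
  set f : Fin 2 × 𝓦 × ℰ → Ω → ℝ := fun p ω =>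
    (S p.1 p.2.1 p.2.2).indicator
      (fun ω' => g p.1 p.2.1 p.2.2 * (Y ω' - μoc p.1 p.2.1 p.2.2) +
        (μoc 1 p.2.1 p.2.2 - μoc 0 p.2.1 p.2.2)) ω with hfdef
  -- pointwise decomposition of the integrand
  have hpt : ∀ ω, (if V ω = 1 then
          (2 * ((A ω : ℕ) : ℝ) - 1) /
              (((A ω : ℕ) : ℝ) * q (W ω) (E ω) +
                (1 - ((A ω : ℕ) : ℝ)) * (1 - q (W ω) (E ω))) *
              (Y ω - μoc (A ω) (W ω) (E ω)) +
            μoc 1 (W ω) (E ω) - μoc 0 (W ω) (E ω)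
        else 0) = ∑ p : Fin 2 × 𝓦 × ℰ, f p ω := by
    intro ω
    by_cases hv : V ω = 1
    · rw [if_pos hv, Fintype.sum_eq_single (⟨A ω, W ω, E ω⟩ : Fin 2 × 𝓦 × ℰ)]
      · have hmem : ω ∈ S (A ω) (W ω) (E ω) := ⟨rfl, rfl, rfl, hv⟩
        simp only [hfdef, Set.indicator_of_mem hmem, hgdef]
        ring
      · intro p hp
        have hnmem : ω ∉ S p.1 p.2.1 p.2.2 := by
          intro hmem
          apply hp
          obtain ⟨h1, h2, h3, _⟩ := hmem
          exact Prod.ext h1.symm (Prod.ext h2.symm h3.symm)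
        simp only [hfdef, Set.indicator_of_notMem hnmem]
    · rw [if_neg hv]
      symm
      apply Finset.sum_eq_zero
      intro p _
      have hnmem : ω ∉ S p.1 p.2.1 p.2.2 := fun hmem => hv hmem.2.2.2
      simp only [hfdef, Set.indicator_of_notMem hnmem]
  -- integrability of each summand
  have hint : ∀ p : Fin 2 × 𝓦 × ℰ, Integrable (f p) P := by
    intro p
    apply Integrable.indicator _ (hSm p.1 p.2.1 p.2.2)
    exact ((hY.sub (integrable_const _)).const_mul _).add (integrable_const _)
  -- each integral equals (μ1 - μ0) * P(S)
  have hInt : ∀ p : Fin 2 × 𝓦 × ℰ, ∫ ω, f p ω ∂P =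
      (μoc 1 p.2.1 p.2.2 - μoc 0 p.2.1 p.2.2) * (P (S p.1 p.2.1 p.2.2)).toReal := by
    rintro ⟨a, w, e⟩
    simp only [hfdef]
    have hrw : (fun ω' => g a w e * (Y ω' - μoc a w e) + (μoc 1 w e - μoc 0 w e)) =
        (fun ω' => g a w e * Y ω' + (μoc 1 w e - μoc 0 w e - g a w e * μoc a w e)) := by
      funext ω'; ring
    rw [hrw, integral_indicator (hSm a w e),
      integral_add ((hY.integrableOn).const_mul _)
        ((integrable_const _).integrableOn),
      integral_const_mul, setIntegral_const, key a w e, smul_eq_mul, measureReal_def]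
    ring
  -- the split of P(W=w, E=e, V=1) over the two arms
  have hT : ∀ w e, (P (S 0 w e)).toReal + (P (S 1 w e)).toReal =
      (P {ω | W ω = w ∧ E ω = e ∧ V ω = 1}).toReal := by
    intro w e
    have hdisj : Disjoint (S 0 w e) (S 1 w e) := by
      rw [Set.disjoint_left]
      rintro ω ⟨h0, -⟩ ⟨h1, -⟩
      rw [h0] at h1
      exact absurd h1 (by decide)
    have hun : S 0 w e ∪ S 1 w e = {ω | W ω = w ∧ E ω = e ∧ V ω = 1} := by
      ext ω
      constructor
      · rintro (⟨-, h⟩ | ⟨-, h⟩) <;> exact h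
      · rintro ⟨h1, h2, h3⟩
        have hA2 : A ω = 0 ∨ A ω = 1 := by
          have hlt := (A ω).isLt
          have h2 : (A ω).val = 0 ∨ (A ω).val = 1 := by omega
          rcases h2 with h | h
          · left; exact Fin.ext h
          · right; exact Fin.ext h
        rcases hA2 with h | h
        · exact Or.inl ⟨h, h1, h2, h3⟩
        · exact Or.inr ⟨h, h1, h2, h3⟩
    rw [← ENNReal.toReal_add (hSfin 0 w e) (hSfin 1 w e),
      ← measure_union hdisj (hSm 1 w e), hun]
  -- compute the integral
  have hIeq : (∫ ω, (if V ω = 1 then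
          (2 * ((A ω : ℕ) : ℝ) - 1) /
              (((A ω : ℕ) : ℝ) * q (W ω) (E ω) +
                (1 - ((A ω : ℕ) : ℝ)) * (1 - q (W ω) (E ω))) *
              (Y ω - μoc (A ω) (W ω) (E ω)) +
            μoc 1 (W ω) (E ω) - μoc 0 (W ω) (E ω)
        else 0) ∂P) =
      ∑ w : 𝓦, ∑ e : ℰ, (μoc 1 w e - μoc 0 w e) *
        (P {ω | W ω = w ∧ E ω = e ∧ V ω = 1}).toReal := by
    rw [funext hpt, integral_finset_sum _ (fun p _ => hint p)]
    rw [Finset.sum_congr rfl (fun p _ => hInt p)]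
    rw [Fintype.sum_prod_type]
    simp only [Fintype.sum_prod_type]
    rw [Finset.sum_comm]
    refine Finset.sum_congr rfl (fun w _ => ?_)
    rw [Finset.sum_comm]
    refine Finset.sum_congr rfl (fun e _ => ?_)
    rw [Fin.sum_univ_two, ← hT w e]
    ring
  rw [hIeq, Finset.mul_sum]
  refine Finset.sum_congr rfl (fun w _ => ?_)
  rw [Finset.mul_sum]
  refine Finset.sum_congr rfl (fun e _ => ?_)
  by_cases hTw : 0 < P {ω | W ω = w ∧ E ω = e ∧ V ω = 1}
  · rw [if_pos hTw]
    ring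
  · rw [if_neg hTw]
    have h0 : P {ω | W ω = w ∧ E ω = e ∧ V ω = 1} = 0 :=
      le_antisymm (not_lt.mp hTw) zero_le
    rw [h0]
    simp
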